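/- arXiv:2002.06580 — 2 statements merged into one kernel-verified Lean document; each statement's English description precedes it below -/
import Mathlib

section
/- There exists a unique p̂ ∈ (0, 1/2) satisfying (1−2p̂)³/(2p̂(1−p̂)) = ln((1−p̂)/p̂), and moreover 0.124 < p̂ < 0.1242. -/
noncomputable def gE (p : ℝ) : ℝ :=
  (1-2*p)^3/(2*p*(1-p)) - (Real.log (1-p) - Real.log p)

lemma gE_hasDerivAt {p : ℝ} (h0 : 0 < p) (h1 : p < 1) :
    HasDerivAt gE (((1-2*p)^4 - 4*(1-2*p)^2 + 1)/(4*p^2*(1-p)^2)) p := by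
  have h1p : (0:ℝ) < 1 - p := by linarith
  have hD : 2*p*(1-p) ≠ 0 := by positivity
  have hu : HasDerivAt (fun x : ℝ => 1-2*x) (-2) p := by
    simpa using ((hasDerivAt_id p).const_mul (2:ℝ)).const_sub 1
  have hN : HasDerivAt (fun x : ℝ => (1-2*x)^3) (3*(1-2*p)^2*(-2)) p := by
    simpa using hu.fun_pow 3
  have hone : HasDerivAt (fun x : ℝ => 1 - x) (-1) p := by
    simpa using (hasDerivAt_id p).const_sub 1
  have hDD : HasDerivAt (fun x : ℝ => 2*x*(1-x)) (2*(1-p) + 2*p*(-1)) p := by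
    simpa using ((hasDerivAt_id p).const_mul (2:ℝ)).fun_mul hone
  have hdiv := hN.div hDD hD
  have hlog1 : HasDerivAt (fun x : ℝ => Real.log (1-x)) (-1/(1-p)) p := by
    simpa using hone.log h1p.ne'
  have hlog2 : HasDerivAt Real.log p⁻¹ p := Real.hasDerivAt_log h0.ne'
  have h : HasDerivAt gE _ p := hdiv.sub (hlog1.sub hlog2)
  convert h using 1
  field_simp
  ring

lemma gE_anti : StrictAntiOn gE (Set.Ioc 0 0.24) := by
  apply strictAntiOn_of_deriv_neg (convex_Ioc _ _)
  · intro x hx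
    have h0 : (0:ℝ) < x := hx.1
    have h1 : x < 1 := by have := hx.2; norm_num at this; linarith
    exact ((gE_hasDerivAt h0 h1).continuousAt).continuousWithinAt
  · intro x hx
    rw [interior_Ioc] at hx
    have h0 : (0:ℝ) < x := hx.1
    have h2 : x < 0.24 := hx.2
    have h1 : x < 1 := by linarith
    rw [(gE_hasDerivAt h0 h1).deriv]
    apply div_neg_of_neg_of_pos
    · have ht : (0.2704:ℝ) < (1-2*x)^2 := by nlinarith
      have ht1 : (1-2*x)^2 < 1 := by nlinarith
      nlinarith [mul_pos (sub_pos.mpr ht) (show (0:ℝ) < 3.7296 - (1-2*x)^2 by nlinarith)]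
    · have : (0:ℝ) < 1 - x := by linarith
      positivity

lemma log3_gt_one : (1:ℝ) < Real.log 3 := by
  have h := Real.exp_one_lt_d9
  calc (1:ℝ) = Real.log (Real.exp 1) := (Real.log_exp 1).symm
  _ < Real.log 3 := Real.log_lt_log (Real.exp_pos 1) (by norm_num at h ⊢; linarith)

lemma gE_mid {p : ℝ} (h1 : 0.24 ≤ p) (h2 : p ≤ 0.25) : gE p < 0 := by
  have hp0 : (0:ℝ) < p := by norm_num at h1; linarith
  have hp1 : p < 1 := by norm_num at h2; linarith
  have h1' : (0.24:ℝ) ≤ p := h1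
  have h2' : p ≤ (0.25:ℝ) := h2
  have hD : (0:ℝ) < 2*p*(1-p) := by nlinarith
  have hA : (1-2*p)^3/(2*p*(1-p)) < 1 := by
    rw [div_lt_one hD]; nlinarith
  have hB : 1 < Real.log (1-p) - Real.log p := by
    have h3 : (3:ℝ) ≤ (1-p)/p := by rw [le_div_iff₀ hp0]; nlinarith
    have h4 : Real.log 3 ≤ Real.log ((1-p)/p) := Real.log_le_log (by norm_num) h3
    rw [Real.log_div (by linarith : (1:ℝ)-p ≠ 0) hp0.ne'] at h4
    linarith [log3_gt_one]
  unfold gE; linarith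

lemma log_ratio_gt {p : ℝ} (h1 : 1/4 < p) (h2 : p < 1/2) :
    2 - 4*p < Real.log (1-p) - Real.log p := by
  set hE : ℝ → ℝ := fun x => Real.log (1-x) - Real.log x - (2 - 4*x) with hEdef
  have hder : ∀ x : ℝ, 0 < x → x < 1 →
      HasDerivAt hE (-1/(1-x) - x⁻¹ + 4) x := by
    intro x hx0 hx1
    have h1x : (0:ℝ) < 1 - x := by linarith
    have hone : HasDerivAt (fun y : ℝ => 1 - y) (-1) x := by
      simpa using (hasDerivAt_id x).const_sub 1
    have hlog1 : HasDerivAt (fun y : ℝ => Real.log (1-y)) (-1/(1-x)) x := by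
      simpa using hone.log h1x.ne'
    have hlog2 : HasDerivAt Real.log x⁻¹ x := Real.hasDerivAt_log hx0.ne'
    have hlin : HasDerivAt (fun y : ℝ => 2 - 4*y) (-4) x := by
      simpa using ((hasDerivAt_id x).const_mul (4:ℝ)).const_sub 2
    have : HasDerivAt hE _ x := (hlog1.sub hlog2).sub hlin
    convert this using 1; ring
  have hanti : StrictAntiOn hE (Set.Icc (1/4) (1/2)) := by
    apply strictAntiOn_of_deriv_neg (convex_Icc _ _)
    · intro x hx
      have hx0 : (0:ℝ) < x := by have := hx.1; linarith
      have hx1 : x < 1 := by have := hx.2; linarith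
      exact ((hder x hx0 hx1).continuousAt).continuousWithinAt
    · intro x hx
      rw [interior_Icc] at hx
      have hx0 : (0:ℝ) < x := by have := hx.1; linarith
      have hx1 : x < 1 := by have := hx.2; linarith
      have h1x : (0:ℝ) < 1 - x := by linarith
      rw [(hder x hx0 hx1).deriv]
      have e1 : (-1/(1-x) - x⁻¹ + 4) = 4 - 1/((1-x)*x) := by
        field_simp; ring
      rw [e1]
      have hq : (4:ℝ) < 1/((1-x)*x) := by
        rw [lt_div_iff₀ (by positivity)]
        nlinarith [mul_pos (show (0:ℝ) < 1-2*x by linarith [hx.2]) (show (0:ℝ) < 1-2*x by linarith [hx.2])]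
      linarith
  have hv : hE p > hE (1/2) := by
    apply hanti ⟨le_of_lt h1, le_of_lt h2⟩ ⟨by norm_num, le_refl _⟩ h2
  have : hE (1/2) = 0 := by
    simp only [hEdef]; norm_num
  simp only [hEdef] at hv
  linarith

lemma gE_high {p : ℝ} (h1 : 0.25 < p) (h2 : p < 0.5) : gE p < 0 := by
  have h1' : (1:ℝ)/4 < p := by norm_num at h1 ⊢; linarith
  have h2' : p < (1:ℝ)/2 := by norm_num at h2 ⊢; linarith
  have hp0 : (0:ℝ) < p := by linarith
  have hD : (0:ℝ) < 2*p*(1-p) := by nlinarith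
  have hA : (1-2*p)^3/(2*p*(1-p)) < 2 - 4*p := by
    rw [div_lt_iff₀ hD]
    nlinarith [mul_pos (sub_pos.mpr h1') (sub_pos.mpr h2'),
      mul_pos (mul_pos (sub_pos.mpr h1') (sub_pos.mpr h2')) (show (0:ℝ) < 1-2*p by linarith)]
  have hB := log_ratio_gt h1' h2'
  unfold gE; linarith

lemma log_ub : Real.log (219/31) < 1.9574 := by
  rw [Real.log_lt_iff_lt_exp (by norm_num)]
  have h2 : (7.3890560:ℝ) < Real.exp 2 := by
    have h := Real.exp_one_gt_d9
    have e2 : Real.exp 2 = Real.exp 1 * Real.exp 1 := by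
      rw [← Real.exp_add]; norm_num
    nlinarith [Real.exp_pos 1]
  have hsplit : Real.exp 1.9574 * Real.exp 0.0426 = Real.exp 2 := by
    rw [← Real.exp_add]; norm_num
  have hb : Real.exp 0.0426 * 0.9574 ≤ 1 := by
    have ha := Real.add_one_le_exp (-0.0426 : ℝ)
    have hm : Real.exp (-0.0426) * Real.exp 0.0426 = 1 := by
      rw [← Real.exp_add]; norm_num
    nlinarith [Real.exp_pos (0.0426:ℝ)]
  nlinarith [Real.exp_pos (1.9574:ℝ), Real.exp_pos (0.0426:ℝ)]

lemma log_lb : (1.952:ℝ) < Real.log (4379/621) := by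
  rw [show (1.952:ℝ) = Real.log (Real.exp 1.952) from (Real.log_exp _).symm]
  apply Real.log_lt_log (Real.exp_pos _)
  have h2 : Real.exp 2 < 7.3890561 := by
    have h := Real.exp_one_lt_d9
    have e2 : Real.exp 2 = Real.exp 1 * Real.exp 1 := by
      rw [← Real.exp_add]; norm_num
    nlinarith [Real.exp_pos 1]
  have hsplit : Real.exp 1.952 * Real.exp 0.048 = Real.exp 2 := by
    rw [← Real.exp_add]; norm_num
  have hb : (1.048:ℝ) ≤ Real.exp 0.048 := by
    have := Real.add_one_le_exp (0.048:ℝ); linarith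
  nlinarith [Real.exp_pos (1.952:ℝ)]

lemma g_left : 0 < gE 0.124 := by
  have h1 : Real.log (1 - 0.124) - Real.log 0.124 = Real.log (219/31) := by
    rw [← Real.log_div (by norm_num) (by norm_num)]; norm_num
  have h2 : gE 0.124
      = (1-2*0.124)^3/(2*0.124*(1-0.124)) - (Real.log (1-0.124) - Real.log 0.124) := rfl
  rw [h2, h1]
  have hc : (1.9574:ℝ) < (1-2*0.124)^3/(2*0.124*(1-0.124)) := by norm_num
  linarith [log_ub]

lemma g_right : gE 0.1242 < 0 := by
  have h1 : Real.log (1 - 0.1242) - Real.log 0.1242 = Real.log (4379/621) := by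
    rw [← Real.log_div (by norm_num) (by norm_num)]; norm_num
  have h2 : gE 0.1242
      = (1-2*0.1242)^3/(2*0.1242*(1-0.1242)) - (Real.log (1-0.1242) - Real.log 0.1242) := rfl
  rw [h2, h1]
  have hc : (1-2*0.1242)^3/(2*0.1242*(1-0.1242)) < (1.952:ℝ) := by norm_num
  linarith [log_lb]

/-- There is a unique `p̂ ∈ (0,1/2)` with `(1-2p̂)³/(2p̂(1-p̂)) = ln((1-p̂)/p̂)`,
and `0.124 < p̂ < 0.1242`. -/
theorem threshold_qEve_unique :
    ∃ p : ℝ, (p ∈ Set.Ioo (0:ℝ) (1/2)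
        ∧ (1 - 2*p)^3 / (2*p*(1-p)) = Real.log ((1-p)/p)
        ∧ 0.124 < p ∧ p < 0.1242)
      ∧ ∀ p' : ℝ, p' ∈ Set.Ioo (0:ℝ) (1/2) →
          (1 - 2*p')^3 / (2*p'*(1-p')) = Real.log ((1-p')/p') → p' = p := by
  have hcont : ContinuousOn gE (Set.Icc 0.124 0.1242) := by
    intro x hx
    have h0 : (0:ℝ) < x := by have := hx.1; norm_num at this; linarith
    have h1 : x < 1 := by have := hx.2; norm_num at this; linarith
    exact ((gE_hasDerivAt h0 h1).continuousAt).continuousWithinAt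
  have hivt := intermediate_value_Ioo' (by norm_num : (0.124:ℝ) ≤ 0.1242) hcont
  have hmem : (0:ℝ) ∈ Set.Ioo (gE 0.1242) (gE 0.124) := ⟨g_right, g_left⟩
  obtain ⟨p, hp, hgp⟩ := hivt hmem
  have hp1 : (0.124:ℝ) < p := hp.1
  have hp2 : p < (0.1242:ℝ) := hp.2
  have hp1' : (0:ℝ) < p := by norm_num at hp1 ⊢; linarith
  have hp2' : p < 1/2 := by norm_num at hp2 ⊢; linarith
  have heq : (1 - 2*p)^3 / (2*p*(1-p)) = Real.log ((1-p)/p) := by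
    have h := hgp
    unfold gE at h
    rw [Real.log_div (by linarith : (1:ℝ)-p ≠ 0) hp1'.ne']
    linarith
  refine ⟨p, ⟨⟨hp1', hp2'⟩, heq, hp1, hp2⟩, ?_⟩
  intro p' hp' heq'
  have h0' : (0:ℝ) < p' := hp'.1
  have h2' : p' < 1/2 := hp'.2
  have hg' : gE p' = 0 := by
    rw [Real.log_div (by linarith : (1:ℝ)-p' ≠ 0) h0'.ne'] at heq'
    unfold gE; linarith
  by_cases hc1 : p' ≤ 0.24
  · exact gE_anti.injOn ⟨h0', hc1⟩
      ⟨by linarith, by norm_num at hp2 ⊢; linarith⟩ (hg'.trans hgp.symm)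
  · push_neg at hc1
    by_cases hc2 : p' ≤ 0.25
    · linarith [gE_mid hc1.le hc2]
    · push_neg at hc2
      have : p' < (0.5:ℝ) := by norm_num at h2' ⊢; linarith
      linarith [gE_high hc2 this]
end

section
/- Fenchel–Eggleston theorem: If S ⊆ ℝⁿ is a union of at most n connected subsets, then every point y in the convex hull of S lies in the convex hull of at most n points of S. -/
open Finset

set_option maxHeartbeats 1600000 in
/-- Fenchel–Eggleston theorem: if `S ⊆ ℝⁿ` is a union of `n` connected sets, then
every point of `conv S` lies in the convex hull of at most `n` points of `S`. -/
theorem fenchel_eggleston (n : ℕ) (S : Set (EuclideanSpace ℝ (Fin n)))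
    (Si : Fin n → Set (EuclideanSpace ℝ (Fin n)))
    (hunion : S = ⋃ i, Si i) (hconn : ∀ i, IsConnected (Si i))
    (y : EuclideanSpace ℝ (Fin n)) (hy : y ∈ convexHull ℝ S) :
    ∃ S' ⊆ S, S'.Finite ∧ S'.ncard ≤ n ∧ y ∈ convexHull ℝ S' := by
  classical

  obtain ⟨ι, hfin, z, w, hzS, hai, hw0, hw1, hwy⟩ :=
    eq_pos_convex_span_of_mem_convexHull hy
  have hzinj : Function.Injective z := hai.injective
  have hrange_card : (Set.range z).ncard = Fintype.card ι := by
    have h1 : Set.range z = ↑(Finset.univ.image z) := by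
      ext x; simp
    rw [h1, Set.ncard_coe_finset, Finset.card_image_of_injective _ hzinj,
      Finset.card_univ]
  have hymem : ∀ (T : Set (EuclideanSpace ℝ (Fin n))), Set.range z ⊆ T → y ∈ convexHull ℝ T := by
    intro T hT
    have := Finset.univ.centerMass_mem_convexHull (w := w) (z := z)
      (fun i _ => (hw0 i).le) (by rw [hw1]; norm_num)
      (fun i _ => hT ⟨i, rfl⟩)
    rwa [Finset.centerMass_eq_of_sum_1 _ _ hw1, hwy] at this
  have hcard : Fintype.card ι ≤ n + 1 := by
    have h1 := hai.card_le_finrank_succ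
    have h2 : Module.finrank ℝ (vectorSpan ℝ (Set.range z)) ≤ n := by
      have := Submodule.finrank_le (vectorSpan ℝ (Set.range z))
      simpa [finrank_euclideanSpace_fin] using this
    omega
  by_cases hle : Fintype.card ι ≤ n
  · exact ⟨Set.range z, fun x hx => hzS hx, Set.finite_range z,
      by rw [hrange_card]; exact hle, hymem _ le_rfl⟩
  have hcard' : Fintype.card ι = n + 1 := by omega
  -- build an affine basis
  have hspan : affineSpan ℝ (Set.range z) = ⊤ :=
    hai.affineSpan_eq_top_iff_card_eq_finrank_add_one.mpr
      (by simp [finrank_euclideanSpace_fin, hcard'])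
  let b : AffineBasis ι ℝ (EuclideanSpace ℝ (Fin n)) := ⟨z, hai, hspan⟩
  have hbz : ∀ i, b i = z i := fun _ => rfl
  have hcoord_y : ∀ i, b.coord i y = w i := by
    intro i
    have hy' : y = Finset.univ.affineCombination ℝ (⇑b) w := by
      rw [Finset.univ.affineCombination_eq_linear_combination (⇑b) w hw1]
      exact hwy.symm
    rw [hy']
    exact b.coord_apply_combination_of_mem (Finset.mem_univ i) hw1
  -- pigeonhole
  have hchoice : ∀ i : ι, ∃ j : Fin n, z i ∈ Si j := by
    intro i
    have hz : z i ∈ S := hzS ⟨i, rfl⟩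
    rw [hunion] at hz
    simpa using hz
  choose idx hidx using hchoice
  obtain ⟨p, q, hpq, hij⟩ := Fintype.exists_ne_map_eq_of_card_lt idx
    (by simp [hcard'])
  set C := Si (idx p) with hC
  have hzpC : z p ∈ C := hidx p
  have hzqC : z q ∈ C := by rw [hC, hij]; exact hidx q
  -- the ratio functions
  set μ : ι → EuclideanSpace ℝ (Fin n) → ℝ := fun i x => b.coord i x / w i with hμ
  have hμcont : ∀ i, Continuous (μ i) :=
    fun i => (continuous_barycentric_coord b i).div_const (w i)
  have hne : (Finset.univ.erase p).Nonempty := ⟨q, Finset.mem_erase.mpr ⟨fun h => hpq h.symm, Finset.mem_univ q⟩⟩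
  set g : EuclideanSpace ℝ (Fin n) → ℝ := fun x => μ p x - (Finset.univ.erase p).sup' hne (fun j => μ j x) with hg
  have hgcont : Continuous g := by
    apply Continuous.sub (hμcont p)
    rw [continuous_iff_continuousAt]
    intro x
    exact ContinuousAt.finset_sup'_apply hne (fun i _ => (hμcont i).continuousAt)
  have hμ_on_z : ∀ i j : ι, μ i (z j) = if i = j then 1 / w i else 0 := by
    intro i j
    have h : b.coord i (b j) = if i = j then 1 else 0 := b.coord_apply i j
    simp only [hbz] at h
    show b.coord i (z j) / w i = _
    rw [h]
    split <;> simp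
  have hgp : 0 < g (z p) := by
    have h1 : (Finset.univ.erase p).sup' hne (fun j => μ j (z p)) = 0 := by
      rw [← Finset.sup'_const hne (0 : ℝ)]
      apply Finset.sup'_congr hne rfl
      intro j hj
      rw [hμ_on_z]
      simp [(Finset.mem_erase.mp hj).1]
    have h2 : μ p (z p) = 1 / w p := by rw [hμ_on_z]; simp
    show 0 < μ p (z p) - (Finset.univ.erase p).sup' hne (fun j => μ j (z p))
    rw [h1, h2, sub_zero]
    exact one_div_pos.mpr (hw0 p)
  have hgq : g (z q) < 0 := by
    have h1 : μ q (z q) ≤ (Finset.univ.erase p).sup' hne (fun j => μ j (z q)) :=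
      Finset.le_sup' (fun j => μ j (z q)) (Finset.mem_erase.mpr ⟨fun h => hpq h.symm, Finset.mem_univ q⟩)
    have h2 : μ p (z q) = 0 := by rw [hμ_on_z]; simp [hpq]
    have h3 : (0:ℝ) < μ q (z q) := by
      rw [hμ_on_z]; simp only [if_pos rfl]; exact one_div_pos.mpr (hw0 q)
    show μ p (z q) - (Finset.univ.erase p).sup' hne (fun j => μ j (z q)) < 0
    linarith
  -- intermediate value theorem on the connected set C
  have hIVT : ∃ x₀ ∈ C, g x₀ = 0 := by
    have h := (hconn (idx p)).isPreconnected.intermediate_value hzqC hzpC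
      hgcont.continuousOn
    have h0 : (0:ℝ) ∈ Set.Icc (g (z q)) (g (z p)) := ⟨hgq.le, hgp.le⟩
    obtain ⟨x₀, hx₀, hgx₀⟩ := h h0
    exact ⟨x₀, hx₀, hgx₀⟩
  obtain ⟨x₀, hx₀C, hgx₀⟩ := hIVT
  obtain ⟨b', hb'mem, hb'sup⟩ := Finset.exists_mem_eq_sup' hne (fun j => μ j x₀)
  have hb'p : b' ≠ p := (Finset.mem_erase.mp hb'mem).1
  have hgx₀' : μ p x₀ - (Finset.univ.erase p).sup' hne (fun j => μ j x₀) = 0 := hgx₀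
  have hμpb' : μ p x₀ = μ b' x₀ := by
    have h : μ p x₀ = (Finset.univ.erase p).sup' hne (fun j => μ j x₀) := by linarith
    rw [h, hb'sup]
  have hmax : ∀ i, μ i x₀ ≤ μ p x₀ := by
    intro i
    by_cases hip : i = p
    · rw [hip]
    · have h : μ i x₀ ≤ (Finset.univ.erase p).sup' hne (fun j => μ j x₀) :=
        Finset.le_sup' (fun j => μ j x₀) (Finset.mem_erase.mpr ⟨hip, Finset.mem_univ i⟩)
      linarith
  set β : ι → ℝ := fun i => b.coord i x₀ with hβ
  have hβsum : ∑ i, β i = 1 := b.sum_coord_apply_eq_one x₀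
  have hμβ : ∀ i, μ i x₀ = β i / w i := fun i => rfl
  have hμp_ge_one : 1 ≤ μ p x₀ := by
    have h1 : ∀ i, w i * μ i x₀ = β i := by
      intro i
      rw [hμβ, mul_div_cancel₀]
      exact (hw0 i).ne'
    have h2 : ∑ i, w i * μ i x₀ ≤ ∑ i, w i * μ p x₀ := by
      apply Finset.sum_le_sum
      intro i _
      exact mul_le_mul_of_nonneg_left (hmax i) (hw0 i).le
    have h3 : ∑ i, w i * μ p x₀ = μ p x₀ := by
      rw [← Finset.sum_mul, hw1, one_mul]
    calc (1:ℝ) = ∑ i, β i := hβsum.symm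
      _ = ∑ i, w i * μ i x₀ := by simp [h1]
      _ ≤ ∑ i, w i * μ p x₀ := h2
      _ = μ p x₀ := h3
  have hβp_pos : 0 < β p := by
    have h : 0 < μ p x₀ := lt_of_lt_of_le one_pos hμp_ge_one
    have h2 : μ p x₀ * w p = β p := by rw [hμβ, div_mul_cancel₀ _ (hw0 p).ne']
    nlinarith [hw0 p]
  set θ : ℝ := w p / β p with hθ
  have hθpos : 0 < θ := div_pos (hw0 p) hβp_pos
  set c : ι → ℝ := fun i => w i - θ * β i with hc
  have hc_nonneg : ∀ i, 0 ≤ c i := by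
    intro i
    have h1 : β i / w i ≤ β p / w p := by rw [← hμβ, ← hμβ]; exact hmax i
    have h2 : β i * w p ≤ β p * w i :=
      (div_le_div_iff₀ (hw0 i) (hw0 p)).mp h1
    have h3 : θ * β i ≤ w i := by
      rw [hθ, div_mul_eq_mul_div, div_le_iff₀ hβp_pos]
      nlinarith
    show 0 ≤ w i - θ * β i
    linarith
  have hcp : c p = 0 := by
    show w p - θ * β p = 0
    rw [hθ]
    field_simp
    ring
  have hcb' : c b' = 0 := by
    have h1 : β b' / w b' = β p / w p := by rw [← hμβ, ← hμβ, ← hμpb']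
    have h2 : β b' * w p = β p * w b' :=
      (div_eq_div_iff (hw0 b').ne' (hw0 p).ne').mp h1
    show w b' - θ * β b' = 0
    rw [hθ, div_mul_eq_mul_div, sub_eq_zero, eq_div_iff hβp_pos.ne']
    nlinarith
  have hcsum : ∑ i, c i = 1 - θ := by
    show ∑ i, (w i - θ * β i) = 1 - θ
    rw [Finset.sum_sub_distrib, hw1, ← Finset.mul_sum, hβsum, mul_one]
  -- the final weights and points
  set W : ι → ℝ := fun i => if i = p then θ else c i with hW
  set F : ι → EuclideanSpace ℝ (Fin n) := fun i => if i = p then x₀ else z i with hF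
  set u : Finset ι := Finset.univ.erase b' with hu
  have hpu : p ∈ u := Finset.mem_erase.mpr ⟨fun h => hb'p h.symm, Finset.mem_univ p⟩
  have hWsum : ∑ i ∈ u, W i = 1 := by
    rw [← Finset.add_sum_erase u W hpu]
    have h1 : W p = θ := if_pos rfl
    have h2 : ∑ i ∈ u.erase p, W i = ∑ i ∈ u.erase p, c i := by
      apply Finset.sum_congr rfl
      intro i hi
      show (if i = p then θ else c i) = c i
      rw [if_neg (Finset.mem_erase.mp hi).1]
    have h3 : ∑ i ∈ u.erase p, c i = ∑ i, c i := by
      rw [Finset.sum_erase _ hcp, hu, Finset.sum_erase _ hcb']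
    rw [h1, h2, h3, hcsum]
    ring
  have hzx₀ : ∑ i, β i • z i = x₀ := by
    have := b.linear_combination_coord_eq_self x₀
    simpa [hbz] using this
  have hWF : ∑ i ∈ u, W i • F i = y := by
    rw [← Finset.add_sum_erase u (fun i => W i • F i) hpu]
    have h1 : W p • F p = θ • x₀ := by
      show (if p = p then θ else c p) • (if p = p then x₀ else z p) = θ • x₀
      rw [if_pos rfl, if_pos rfl]
    have h2 : ∑ i ∈ u.erase p, W i • F i = ∑ i ∈ u.erase p, c i • z i := by
      apply Finset.sum_congr rfl
      intro i hi
      show (if i = p then θ else c i) • (if i = p then x₀ else z i) = c i • z i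
      rw [if_neg (Finset.mem_erase.mp hi).1, if_neg (Finset.mem_erase.mp hi).1]
    have h3 : ∑ i ∈ u.erase p, c i • z i = ∑ i, c i • z i := by
      rw [Finset.sum_erase (f := fun i => c i • z i) _
          (show c p • z p = 0 by rw [hcp, zero_smul]), hu,
        Finset.sum_erase (f := fun i => c i • z i) _
          (show c b' • z b' = 0 by rw [hcb', zero_smul])]
    have h4 : ∑ i, c i • z i = y - θ • x₀ := by
      have : ∀ i, c i • z i = w i • z i - θ • (β i • z i) := by
        intro i
        show (w i - θ * β i) • z i = _
        rw [sub_smul, mul_smul]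
      simp only [this]
      rw [Finset.sum_sub_distrib, hwy, ← Finset.smul_sum, hzx₀]
    rw [h1, h2, h3, h4]
    abel
  -- assemble
  set S' : Set (EuclideanSpace ℝ (Fin n)) := insert x₀ (Set.range z \ {z p, z b'}) with hS'
  have hCS : C ⊆ S := by rw [hunion]; exact Set.subset_iUnion Si (idx p)
  have hS'S : S' ⊆ S := by
    rw [hS']
    intro x hx
    rcases hx with rfl | ⟨hx1, _⟩
    · exact hCS hx₀C
    · exact hzS hx1
  have hS'fin : S'.Finite := Set.Finite.insert x₀ ((Set.finite_range z).diff)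
  have hn1 : 1 ≤ n := by
    have h2 : 2 ≤ Fintype.card ι := Fintype.one_lt_card_iff_nontrivial.mpr ⟨p, q, hpq⟩
    omega
  have hS'card : S'.ncard ≤ n := by
    have hsub : ({z p, z b'} : Set (EuclideanSpace ℝ (Fin n))) ⊆ Set.range z := by
      intro x hx
      rcases hx with rfl | rfl
      exacts [⟨p, rfl⟩, ⟨b', rfl⟩]
    have hpair : ({z p, z b'} : Set (EuclideanSpace ℝ (Fin n))).ncard = 2 := by
      rw [Set.ncard_pair (fun h => hb'p (hzinj h).symm)]
    have hdiff : (Set.range z \ {z p, z b'}).ncard = n - 1 := by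
      rw [Set.ncard_diff hsub, hrange_card, hcard', hpair]
      omega
    calc S'.ncard ≤ (Set.range z \ {z p, z b'}).ncard + 1 := Set.ncard_insert_le _ _
      _ = n := by rw [hdiff]; omega
  have hymem' : y ∈ convexHull ℝ S' := by
    have hW0 : ∀ i ∈ u, 0 ≤ W i := by
      intro i _
      show 0 ≤ if i = p then θ else c i
      split
      · exact hθpos.le
      · exact hc_nonneg i
    have hFmem : ∀ i ∈ u, F i ∈ S' := by
      intro i hi
      show (if i = p then x₀ else z i) ∈ S'
      split
      · exact Set.mem_insert _ _
      · next hip =>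
        apply Set.mem_insert_of_mem
        refine ⟨⟨i, rfl⟩, ?_⟩
        intro hmem
        rcases hmem with h | h
        · exact hip (hzinj h)
        · exact (Finset.mem_erase.mp hi).1 (hzinj h)
    have := u.centerMass_mem_convexHull hW0 (by rw [hWsum]; norm_num) hFmem
    rwa [Finset.centerMass_eq_of_sum_1 _ _ hWsum, hWF] at this
  exact ⟨S', hS'S, hS'fin, hS'card, hymem'⟩
end
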